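/- Let F be the 2×2 matrix [[1,0],[1,1]] over the field GF(2), and let F^{⊗n} denote its n-fold Kronecker power, a 2^n × 2^n matrix over GF(2). Then for every row index i ∈ {0, 1, …, 2^n − 1}, the number of nonzero entries in row i of F^{⊗n} equals 2^{w(i)}, where w(i) is the number of ones in the binary expansion of i. -/

import Mathlib

open Matrix

/-- The basic polarization matrix `F = [[1,0],[1,1]]` over `GF(2)`. -/
def polarF : Matrix (Fin 2) (Fin 2) (ZMod 2) := !![1, 0; 1, 1]

/-- The `n`-fold Kronecker power `F^{⊗n}` of `F`, a `2^n × 2^n` matrix over `GF(2)`,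
with indices identified with `{0, …, 2^n − 1}` via binary expansions
(row `i` of `F ⊗ A` is obtained from row `i / 2^n` of `F` and row `i % 2^n` of `A`). -/
def polarFPow : (n : ℕ) → Matrix (Fin (2 ^ n)) (Fin (2 ^ n)) (ZMod 2)
  | 0 => fun _ _ => 1
  | n + 1 =>
      Matrix.reindex
        (finProdFinEquiv.trans (finCongr (by rw [pow_succ, Nat.mul_comm])))
        (finProdFinEquiv.trans (finCongr (by rw [pow_succ, Nat.mul_comm])))
        (Matrix.kroneckerMap (· * ·) polarF (polarFPow n))

/-- Hamming weight of the binary expansion of a natural number. -/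
def hammingWt (i : ℕ) : ℕ := (Nat.digits 2 i).count 1

lemma count_digits_rec (lo : ℕ) (h : 0 < lo) :
    (Nat.digits 2 lo).count 1 =
      (Nat.digits 2 (lo / 2)).count 1 + (if lo % 2 = 1 then 1 else 0) := by
  rw [Nat.digits_def' (by norm_num) h, List.count_cons]
  rcases Nat.mod_two_eq_zero_or_one lo with h2 | h2 <;> simp [h2]

lemma ham_pow_add (n : ℕ) : ∀ lo < 2 ^ n,
    (Nat.digits 2 (2 ^ n + lo)).count 1 = (Nat.digits 2 lo).count 1 + 1 := by
  induction n with
  | zero => intro lo h; interval_cases lo; simp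
  | succ n ih =>
    intro lo h
    have h2 : (2 ^ (n+1) + lo) % 2 = lo % 2 := by rw [pow_succ]; omega
    have h3 : (2 ^ (n+1) + lo) / 2 = 2 ^ n + lo / 2 := by rw [pow_succ]; omega
    rw [count_digits_rec _ (by positivity), h2, h3, ih (lo / 2) (by omega)]
    rcases Nat.eq_zero_or_pos lo with rfl | hp
    · simp
    · rw [count_digits_rec lo hp]; omega

lemma polarF_row_card (a : Fin 2) :
    (Finset.univ.filter (fun b => polarF a b ≠ 0)).card = 2 ^ a.val := by
  fin_cases a <;> decide

theorem row_weight_kronecker_pow (n : ℕ) (i : Fin (2 ^ n)) :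
    (Finset.univ.filter (fun j => polarFPow n i j ≠ 0)).card = 2 ^ hammingWt i.val := by
  induction n with
  | zero =>
    have : i = 0 := by omega
    subst this
    simp [polarFPow, hammingWt]
  | succ n ih =>
    set e : Fin 2 × Fin (2 ^ n) ≃ Fin (2 ^ (n + 1)) :=
      finProdFinEquiv.trans (finCongr (by rw [pow_succ, Nat.mul_comm])) with he
    have key : ∀ x y : Fin (2 ^ (n + 1)),
        polarFPow (n + 1) x y =
          polarF (e.symm x).1 (e.symm y).1 * polarFPow n (e.symm x).2 (e.symm y).2 := by
      intro x y
      simp [polarFPow, he, Matrix.kroneckerMap_apply]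
    have hcard : (Finset.univ.filter (fun j => polarFPow (n + 1) i j ≠ 0)).card
        = (Finset.univ.filter (fun p : Fin 2 × Fin (2 ^ n) =>
            polarF (e.symm i).1 p.1 ≠ 0 ∧ polarFPow n (e.symm i).2 p.2 ≠ 0)).card := by
      apply Finset.card_bij (fun j _ => e.symm j)
      · intro j hj
        simp only [Finset.mem_filter, Finset.mem_univ, true_and] at hj ⊢
        rw [key] at hj
        exact ⟨fun h0 => hj (by rw [h0, zero_mul]), fun h0 => hj (by rw [h0, mul_zero])⟩
      · intro x _ y _ hxy
        exact e.symm.injective hxy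
      · intro p hp
        refine ⟨e p, ?_, by simp⟩
        simp only [Finset.mem_filter, Finset.mem_univ, true_and] at hp ⊢
        rw [key]
        simp only [Equiv.symm_apply_apply]
        exact mul_ne_zero hp.1 hp.2
    rw [hcard]
    rw [← Finset.univ_product_univ,
      Finset.filter_product (fun a => polarF (e.symm i).1 a ≠ 0)
        (fun b => polarFPow n (e.symm i).2 b ≠ 0),
      Finset.card_product, polarF_row_card, ih]
    have hv1 : ((e.symm i).1 : ℕ) = i.val / 2 ^ n := rfl
    have hv2 : ((e.symm i).2 : ℕ) = i.val % 2 ^ n := rfl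
    rw [hv1, hv2, ← pow_add]
    congr 1
    have hpos : 0 < 2 ^ n := Nat.pow_pos (by norm_num)
    have hsum : 2 ^ n * (i.val / 2 ^ n) + i.val % 2 ^ n = i.val :=
      Nat.div_add_mod i.val (2 ^ n)
    have hmod : i.val % 2 ^ n < 2 ^ n := Nat.mod_lt _ hpos
    have hd : i.val / 2 ^ n < 2 := by
      apply Nat.div_lt_of_lt_mul
      rw [← pow_succ]
      exact i.isLt
    have hd' : i.val / 2 ^ n = 0 ∨ i.val / 2 ^ n = 1 := by
      rcases Nat.lt_or_ge (i.val / 2 ^ n) 1 with h | h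
      · exact Or.inl (Nat.lt_one_iff.mp h)
      · exact Or.inr (le_antisymm (Nat.lt_succ_iff.mp hd) h)
    rcases hd' with h0 | h1
    · rw [h0, Nat.mul_zero, Nat.zero_add] at hsum
      rw [h0, hsum, Nat.zero_add]
    · rw [h1, Nat.mul_one] at hsum
      rw [h1]
      unfold hammingWt
      rw [← hsum, Nat.add_mod_left, Nat.mod_eq_of_lt hmod, ham_pow_add n _ hmod]
      omega
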